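/- arXiv:1411.3601 — 4 statements merged into one kernel-verified Lean document; each statement's English description precedes it below -/
import Mathlib

section
/- The maximum size of a rank-metric code in M_{m×n}(q) with minimum rank distance d (where 1 ≤ d ≤ m ≤ n) is q^{n(m-d+1)}; i.e., any code A ⊆ M_{m×n}(q) such that rank(A - B) ≥ d for all distinct A, B ∈ A satisfies |A| ≤ q^{n(m-d+1)} (the Singleton bound for the rank metric). -/
open Module Submodule

lemma rank_le_of_rows_zero {m n : ℕ} {F : Type*} [Field F]
    (M : Matrix (Fin m) (Fin n) F) (k : ℕ)
    (h : ∀ i : Fin m, (i : ℕ) < k → M i = 0) :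
    M.rank ≤ m - k := by
  classical
  rw [Matrix.rank_eq_finrank_span_row]
  set s : Finset (Fin n → F) :=
    (Finset.univ.filter fun i : Fin m => k ≤ (i : ℕ)).image M with hs
  have hsub : Set.range M ⊆ insert 0 (↑s : Set (Fin n → F)) := by
    rintro _ ⟨i, rfl⟩
    by_cases hi : (i : ℕ) < k
    · exact Or.inl (h i hi)
    · exact Or.inr (Finset.mem_coe.mpr (Finset.mem_image.mpr
        ⟨i, Finset.mem_filter.mpr ⟨Finset.mem_univ _, by omega⟩, rfl⟩))
  have hle : span F (Set.range M) ≤ span F (↑s : Set (Fin n → F)) :=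
    (Submodule.span_mono hsub).trans (le_of_eq (Submodule.span_insert_zero))
  have h1 : finrank F (span F (Set.range M)) ≤ finrank F (span F (↑s : Set (Fin n → F))) :=
    Submodule.finrank_mono hle
  have h2 : finrank F (span F (↑s : Set (Fin n → F))) ≤ s.card :=
    finrank_span_finset_le_card s
  have h3 : s.card ≤ m - k := by
    refine le_trans (Finset.card_image_le) ?_
    have : (Finset.univ.filter fun i : Fin m => k ≤ (i : ℕ)).card = m - k := by
      have he : (Finset.univ.filter fun i : Fin m => k ≤ (i : ℕ)).card
          = (Finset.filter (fun i => k ≤ i) (Finset.range m)).card := by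
        rw [Finset.card_filter, Finset.card_filter,
          ← Fin.sum_univ_eq_sum_range (fun i => if k ≤ i then 1 else 0) m]
      rw [he]
      have : Finset.filter (fun i => k ≤ i) (Finset.range m) = Finset.Ico k m := by
        ext x; simp [Finset.mem_Ico]; omega
      rw [this, Nat.card_Ico]
    omega
  exact h1.trans (h2.trans h3)


/-- Singleton bound for the rank metric: a code `C ⊆ M_{m×n}(q)` with `1 ≤ d ≤ m ≤ n`
in which any two distinct elements `A, B` satisfy `rank (A - B) ≥ d` has size at most
`q^(n(m-d+1))`. -/
theorem rank_metric_singleton_bound {q m n d : ℕ} (hd : 1 ≤ d) (hdm : d ≤ m) (hmn : m ≤ n)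
    {F : Type*} [Field F] [Fintype F] (hF : Fintype.card F = q)
    (C : Set (Matrix (Fin m) (Fin n) F))
    (hC : ∀ A ∈ C, ∀ B ∈ C, A ≠ B → d ≤ (A - B).rank) :
    C.ncard ≤ q ^ (n * (m - d + 1)) := by

  classical
  set k := m - d + 1 with hk
  have hkm : k ≤ m := by omega
  set f : Matrix (Fin m) (Fin n) F → Matrix (Fin k) (Fin n) F :=
    fun A => fun i j => A (Fin.castLE hkm i) j with hf
  have hinj : Set.InjOn f C := by
    intro A hA B hB hfAB
    by_contra hne
    have hd' := hC A hA B hB hne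
    have hz : ∀ i : Fin m, (i : ℕ) < k → (A - B) i = 0 := by
      intro i hi
      funext j
      have h1 : f A ⟨(i : ℕ), hi⟩ j = f B ⟨(i : ℕ), hi⟩ j := by rw [hfAB]
      have h2 : (Fin.castLE hkm ⟨(i : ℕ), hi⟩ : Fin m) = i := by
        apply Fin.ext; rfl
      simp only [hf, h2] at h1
      simp [Matrix.sub_apply, h1]
    have hle := rank_le_of_rows_zero (A - B) k hz
    omega
  have hCfin : C.Finite := Set.toFinite C
  have h1 : C.ncard = (f '' C).ncard := (Set.ncard_image_of_injOn hinj).symm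
  have h2 : (f '' C).ncard ≤ (Set.univ : Set (Matrix (Fin k) (Fin n) F)).ncard :=
    Set.ncard_le_ncard (Set.subset_univ _) (Set.toFinite _)
  have h3 : (Set.univ : Set (Matrix (Fin k) (Fin n) F)).ncard
      = Fintype.card (Matrix (Fin k) (Fin n) F) := by
    rw [Set.ncard_univ, Nat.card_eq_fintype_card]
  have h4 : Fintype.card (Matrix (Fin k) (Fin n) F) = q ^ (n * k) := by
    have : Fintype.card (Matrix (Fin k) (Fin n) F) = Fintype.card (Fin k → Fin n → F) := rfl
    rw [this, Fintype.card_fun, Fintype.card_fun, hF, Fintype.card_fin, Fintype.card_fin,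
      ← pow_mul, Nat.mul_comm]
  omega
end

section
/- For n even, the number of n×n skew-symmetric matrices over GF(q) of full rank n equals q^{n(n-2)/4} · ∏_{i=0}^{(n-2)/2} (q^{2i+1} - 1). -/
open Matrix

set_option linter.unusedSectionVars false
set_option maxHeartbeats 1000000

section Aux

variable {F : Type*} [Field F]

lemma aux_rank_eq_card_iff_isUnit {m : ℕ} (A : Matrix (Fin m) (Fin m) F) :
    A.rank = m ↔ IsUnit A := by
  constructor
  · intro h
    rw [← Matrix.mulVec_surjective_iff_isUnit]
    have : LinearMap.range A.mulVecLin = ⊤ := by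
      apply Submodule.eq_top_of_finrank_eq
      rw [Matrix.rank] at h
      simp [h, Module.finrank_pi]
    intro w
    have := this ▸ Submodule.mem_top (x := w) (R := F)
    obtain ⟨v, hv⟩ := LinearMap.mem_range.mp this
    exact ⟨v, hv⟩
  · intro h
    simpa using Matrix.rank_of_isUnit A h

lemma aux_quad_zero {ι : Type*} [Fintype ι] {C : Matrix ι ι F} (h1 : Cᵀ = -C)
    (h2 : ∀ i, C i i = 0) (v : ι → F) : v ⬝ᵥ (C *ᵥ v) = 0 := by
  classical
  have : v ⬝ᵥ (C *ᵥ v) = ∑ p ∈ (Finset.univ ×ˢ Finset.univ : Finset (ι × ι)),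
      v p.1 * C p.1 p.2 * v p.2 := by
    rw [Finset.sum_product]
    simp [dotProduct, mulVec, Finset.mul_sum, mul_assoc]
  rw [this]
  apply Finset.sum_involution (fun p _ => (p.2, p.1))
  · intro ⟨i, j⟩ _
    have : C j i = -C i j := by
      have := congrFun (congrFun h1 i) j
      simpa [Matrix.transpose_apply] using this
    simp only []
    rw [this]; ring
  · intro ⟨i, j⟩ _ hne
    simp only [ne_eq, Prod.mk.injEq, not_and]
    intro h
    subst h
    exact absurd (by simp [h2]) hne
  · intro p _; simp
  · intro ⟨i, j⟩ _; simp

lemma aux_exists_linearEquiv_map {V : Type*} [AddCommGroup V] [Module F V]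
    [FiniteDimensional F V] {v w : V} (hv : v ≠ 0) (hw : w ≠ 0) :
    ∃ e : V ≃ₗ[F] V, e v = w := by
  obtain ⟨p, hp⟩ := Submodule.exists_isCompl (F ∙ v)
  obtain ⟨q, hq⟩ := Submodule.exists_isCompl (F ∙ w)
  have h1 : Module.finrank F (F ∙ v) = Module.finrank F (F ∙ w) := by
    rw [finrank_span_singleton hv, finrank_span_singleton hw]
  have h2 : Module.finrank F p = Module.finrank F q := by
    have e1 := Submodule.finrank_add_eq_of_isCompl hp
    have e2 := Submodule.finrank_add_eq_of_isCompl hq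
    omega
  let espan : (F ∙ v) ≃ₗ[F] (F ∙ w) :=
    (LinearEquiv.toSpanNonzeroSingleton F V v hv).symm.trans
      (LinearEquiv.toSpanNonzeroSingleton F V w hw)
  let ecompl : p ≃ₗ[F] q := LinearEquiv.ofFinrankEq _ _ h2
  let e : V ≃ₗ[F] V :=
    (Submodule.prodEquivOfIsCompl _ _ hp).symm.trans
      ((LinearEquiv.prodCongr espan ecompl).trans (Submodule.prodEquivOfIsCompl _ _ hq))
  refine ⟨e, ?_⟩
  have hv' : (Submodule.prodEquivOfIsCompl _ _ hp).symm v
      = (⟨v, Submodule.mem_span_singleton_self v⟩, 0) := by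
    rw [LinearEquiv.symm_apply_eq]
    simp
  have hes : espan ⟨v, Submodule.mem_span_singleton_self v⟩
      = ⟨w, Submodule.mem_span_singleton_self w⟩ := by
    have h1 : (LinearEquiv.toSpanNonzeroSingleton F V v hv) 1
        = ⟨v, Submodule.mem_span_singleton_self v⟩ :=
      LinearEquiv.toSpanNonzeroSingleton_one F V v hv
    have h2 : (LinearEquiv.toSpanNonzeroSingleton F V w hw) 1
        = ⟨w, Submodule.mem_span_singleton_self w⟩ :=
      LinearEquiv.toSpanNonzeroSingleton_one F V w hw
    have h3 : (LinearEquiv.toSpanNonzeroSingleton F V v hv).symm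
        ⟨v, Submodule.mem_span_singleton_self v⟩ = 1 := by
      rw [LinearEquiv.symm_apply_eq]; exact h1.symm
    simp only [espan, LinearEquiv.trans_apply, h3, h2]
  show ((Submodule.prodEquivOfIsCompl _ _ hq)) ((LinearEquiv.prodCongr espan ecompl)
    ((Submodule.prodEquivOfIsCompl _ _ hp).symm v)) = w
  rw [hv']
  simp [LinearEquiv.prodCongr_apply, hes]

lemma aux_exists_isUnit_mulVec {ι : Type*} [Fintype ι] [DecidableEq ι]
    {v w : ι → F} (hv : v ≠ 0) (hw : w ≠ 0) :
    ∃ Q : Matrix ι ι F, IsUnit Q ∧ Q *ᵥ v = w := by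
  obtain ⟨e, he⟩ := aux_exists_linearEquiv_map (F := F) hv hw
  refine ⟨LinearMap.toMatrix' (e : (ι → F) →ₗ[F] (ι → F)), ?_, ?_⟩
  · rw [Matrix.isUnit_iff_isUnit_det]
    apply Matrix.isUnit_det_of_right_inverse
      (B := LinearMap.toMatrix' (e.symm : (ι → F) →ₗ[F] (ι → F)))
    rw [← LinearMap.toMatrix'_comp]
    simp
  · rw [← Matrix.toLin'_apply, Matrix.toLin'_toMatrix']
    exact he

/-- The bordered matrix `[[0, -bᵀ],[b, C]]`. -/
def Ablk {κ : Type*} (b : κ → F) (C : Matrix κ κ F) :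
    Matrix (Fin 1 ⊕ κ) (Fin 1 ⊕ κ) F :=
  fromBlocks 0 (Matrix.of fun _ j => -b j) (Matrix.of fun i _ => b i) C

variable {κ : Type*} [Fintype κ] [DecidableEq κ]

lemma aux_isUnit_conj_iff (E A : Matrix κ κ F) (hE : IsUnit E) :
    IsUnit (E * A * Eᵀ) ↔ IsUnit A := by
  rw [Matrix.isUnit_iff_isUnit_det, Matrix.isUnit_iff_isUnit_det A, det_mul, det_mul,
    det_transpose]
  have hd : IsUnit E.det := (Matrix.isUnit_iff_isUnit_det E).mp hE
  constructor
  · intro h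
    exact (IsUnit.mul_iff.mp (IsUnit.mul_iff.mp h).1).2
  · intro h
    exact (hd.mul h).mul hd

lemma Ablk_conj (Q : Matrix κ κ F) (b : κ → F) (C : Matrix κ κ F) :
    fromBlocks 1 0 0 Q * Ablk b C * (fromBlocks 1 0 0 Q)ᵀ
      = Ablk (Q *ᵥ b) (Q * C * Qᵀ) := by
  rw [Matrix.fromBlocks_transpose, Matrix.transpose_one, Matrix.transpose_zero]
  rw [Ablk, Ablk, Matrix.fromBlocks_multiply, Matrix.fromBlocks_multiply]
  ext i j
  rcases i with i | i <;> rcases j with j | j <;>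
    simp [Matrix.mul_apply, mulVec, dotProduct, mul_comm]

/-- The standard vector `(1,0,...,0)` on `Fin 1 ⊕ μ`. -/
def e0vec (μ : Type*) (F : Type*) [Field F] : (Fin 1 ⊕ μ) → F := Sum.elim 1 0

lemma e0vec_ne_zero {μ : Type*} : e0vec μ F ≠ 0 := by
  intro h
  have := congrFun h (Sum.inl 0)
  simp [e0vec] at this

/-- Key lemma: invertibility of the doubly bordered matrix reduces to the core. -/
lemma isUnit_Ablk_e0 {μ : Type*} [Fintype μ] [DecidableEq μ]
    (c : μ → F) (D : Matrix μ μ F) :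
    IsUnit (Ablk (e0vec μ F) (Ablk c D)) ↔ IsUnit D := by
  classical
  set C : Matrix (Fin 1 ⊕ μ) (Fin 1 ⊕ μ) F := Ablk c D with hC
  set M : Matrix (Fin 1 ⊕ μ) (Fin 1) F := Matrix.of fun i _ => Sum.elim 0 c i with hM
  set E : Matrix (Fin 1 ⊕ (Fin 1 ⊕ μ)) (Fin 1 ⊕ (Fin 1 ⊕ μ)) F :=
    fromBlocks 1 0 M 1 with hE
  have hEunit : IsUnit E := by
    rw [Matrix.isUnit_iff_isUnit_det, hE, Matrix.det_fromBlocks_zero₁₂]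
    simp
  have key : E * Ablk (e0vec μ F) C * Eᵀ
      = Ablk (e0vec μ F) (fromBlocks 0 0 0 D) := by
    rw [hE, Matrix.fromBlocks_transpose, Matrix.transpose_one, Matrix.transpose_zero]
    rw [Ablk, Matrix.fromBlocks_multiply, Matrix.fromBlocks_multiply, Ablk]
    ext i j
    rcases i with i | i | i <;> rcases j with j | j | j <;>
      simp [hC, hM, e0vec, Ablk, Matrix.mul_apply, fromBlocks]
  have h2 : IsUnit (Ablk (e0vec μ F) C)
      ↔ IsUnit (Ablk (e0vec μ F) (fromBlocks 0 0 0 D)) := by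
    rw [← key, aux_isUnit_conj_iff _ _ hEunit]
  rw [h2]
  have h3 : (Matrix.reindex (Equiv.sumAssoc (Fin 1) (Fin 1) μ)
        (Equiv.sumAssoc (Fin 1) (Fin 1) μ)
        (fromBlocks (fromBlocks 0 (-1) 1 0 : Matrix (Fin 1 ⊕ Fin 1) (Fin 1 ⊕ Fin 1) F) 0 0 D))
      = Ablk (e0vec μ F) (fromBlocks 0 0 0 D) := by
    ext i j
    rcases i with i | i | i <;> rcases j with j | j | j <;>
      simp [Ablk, e0vec, fromBlocks, Matrix.reindex_apply, Equiv.sumAssoc,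
        Matrix.one_apply] <;>
      exact Subsingleton.elim _ _
  have hJ : IsUnit (fromBlocks 0 (-1) 1 0 : Matrix (Fin 1 ⊕ Fin 1) (Fin 1 ⊕ Fin 1) F) := by
    rw [Matrix.isUnit_iff_isUnit_det]
    apply Matrix.isUnit_det_of_right_inverse
      (B := (fromBlocks 0 1 (-1) 0 : Matrix (Fin 1 ⊕ Fin 1) (Fin 1 ⊕ Fin 1) F))
    rw [Matrix.fromBlocks_multiply, ← Matrix.fromBlocks_one]
    congr 1 <;> simp
  have hJd : (fromBlocks 0 (-1) 1 0 : Matrix (Fin 1 ⊕ Fin 1) (Fin 1 ⊕ Fin 1) F).det ≠ 0 := by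
    simpa [isUnit_iff_ne_zero] using (Matrix.isUnit_iff_isUnit_det _).mp hJ
  rw [← h3, Matrix.isUnit_iff_isUnit_det, Matrix.det_reindex_self,
    Matrix.det_fromBlocks_zero₁₂, IsUnit.mul_iff, Matrix.isUnit_iff_isUnit_det D]
  simp [hJd, isUnit_iff_ne_zero]

end Aux

section Counting

open scoped Classical

variable {F : Type*} [Field F] [Fintype F]

/-- Predicate: skew-symmetric (alternating) and invertible. -/
def SkewInv {ι : Type*} [Fintype ι] [DecidableEq ι] (A : Matrix ι ι F) : Prop :=
  Aᵀ = -A ∧ (∀ i, A i i = 0) ∧ IsUnit A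

/-- Count of invertible alternating matrices. -/
noncomputable def Nc (F : Type*) [Field F] [Fintype F]
    (ι : Type*) [Fintype ι] [DecidableEq ι] : ℕ :=
  Nat.card {A : Matrix ι ι F // SkewInv A}

lemma Nc_reindex {ι κ : Type*} [Fintype ι] [DecidableEq ι] [Fintype κ] [DecidableEq κ]
    (e : ι ≃ κ) : Nc F ι = Nc F κ := by
  apply Nat.card_congr
  apply Equiv.subtypeEquiv (Matrix.reindex e e)
  intro A
  constructor
  · rintro ⟨h1, h2, h3⟩
    refine ⟨?_, ?_, ?_⟩
    · ext i j
      have := congrFun (congrFun h1 (e.symm i)) (e.symm j)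
      simpa [Matrix.reindex_apply] using this
    · intro i
      simpa [Matrix.reindex_apply] using h2 (e.symm i)
    · rw [Matrix.isUnit_iff_isUnit_det, Matrix.det_reindex_self,
        ← Matrix.isUnit_iff_isUnit_det]
      exact h3
  · rintro ⟨h1, h2, h3⟩
    refine ⟨?_, ?_, ?_⟩
    · ext i j
      have := congrFun (congrFun h1 (e i)) (e j)
      simpa [Matrix.reindex_apply] using this
    · intro i
      simpa [Matrix.reindex_apply] using h2 (e i)
    · rw [Matrix.isUnit_iff_isUnit_det, Matrix.det_reindex_self,
        ← Matrix.isUnit_iff_isUnit_det] at h3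
      exact h3

variable {κ : Type*} [Fintype κ] [DecidableEq κ]

lemma Ablk_skew {b : κ → F} {C : Matrix κ κ F} (h1 : Cᵀ = -C) (h2 : ∀ i, C i i = 0) :
    (Ablk b C)ᵀ = -(Ablk b C) ∧ ∀ i, Ablk b C i i = 0 := by
  constructor
  · ext i j
    rcases i with i | i <;> rcases j with j | j <;>
      simp [Ablk, fromBlocks] <;>
    · have := congrFun (congrFun h1 i) j
      simpa using this
  · rintro (i | i) <;> simp [Ablk, fromBlocks, h2]

lemma skew_eq_Ablk {A : Matrix (Fin 1 ⊕ κ) (Fin 1 ⊕ κ) F}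
    (h1 : Aᵀ = -A) (h2 : ∀ i, A i i = 0) :
    A = Ablk (fun i => A (Sum.inr i) (Sum.inl 0)) (A.submatrix Sum.inr Sum.inr) := by
  ext i j
  rcases i with i | i <;> rcases j with j | j
  · have : i = j := Subsingleton.elim i j
    subst this
    simpa [Ablk, fromBlocks, Subsingleton.elim i (0 : Fin 1)] using h2 (Sum.inl i)
  · have hi : i = (0 : Fin 1) := Subsingleton.elim _ _
    subst hi
    have h := congrFun (congrFun h1 (Sum.inl 0)) (Sum.inr j)
    simp only [Matrix.transpose_apply, Matrix.neg_apply] at h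
    simp [Ablk, fromBlocks, h]
  · simp [Ablk, fromBlocks, Subsingleton.elim j (0 : Fin 1)]
  · simp [Ablk, fromBlocks]

/-- the fiber over a border vector `b` -/
def Fib (b : κ → F) : Type _ :=
  {C : Matrix κ κ F // (Cᵀ = -C ∧ ∀ i, C i i = 0) ∧ IsUnit (Ablk b C)}

noncomputable instance (b : κ → F) : Fintype (Fib b) := by
  unfold Fib; infer_instance

/-- decomposition of an invertible alternating matrix into border and core -/
noncomputable def decompEquiv :
    {A : Matrix (Fin 1 ⊕ κ) (Fin 1 ⊕ κ) F // SkewInv A} ≃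
      Σ b : {b : κ → F // b ≠ 0}, Fib (F := F) b.1 where
  toFun A := ⟨⟨fun i => A.1 (Sum.inr i) (Sum.inl 0), by
      obtain ⟨h1, h2, h3⟩ := A.2
      intro hb0
      have hrow : ∀ x, A.1 (Sum.inl 0) x = 0 := by
        rintro (j | j)
        · have hj : j = (0 : Fin 1) := Subsingleton.elim _ _
          subst hj; exact h2 _
        · have h := congrFun (congrFun h1 (Sum.inl 0)) (Sum.inr j)
          simp only [Matrix.transpose_apply, Matrix.neg_apply] at h
          have hbj : A.1 (Sum.inr j) (Sum.inl 0) = 0 := congrFun hb0 j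
          have : -A.1 (Sum.inl 0) (Sum.inr j) = 0 := by rw [← h]; exact hbj
          simpa using this
      have hdet : A.1.det = 0 := Matrix.det_eq_zero_of_row_eq_zero (Sum.inl 0) hrow
      have := (Matrix.isUnit_iff_isUnit_det _).mp h3
      rw [hdet] at this
      simp at this⟩,
    ⟨A.1.submatrix Sum.inr Sum.inr, by
      obtain ⟨h1, h2, h3⟩ := A.2
      refine ⟨⟨?_, ?_⟩, ?_⟩
      · ext i j
        have := congrFun (congrFun h1 (Sum.inr i)) (Sum.inr j)
        simpa using this
      · intro i
        simpa using h2 (Sum.inr i)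
      · rw [← skew_eq_Ablk h1 h2]
        exact h3⟩⟩
  invFun p := ⟨Ablk p.1.1 p.2.1, by
    obtain ⟨hs, hu⟩ := p.2.2
    obtain ⟨t1, t2⟩ := Ablk_skew (F := F) (b := p.1.1) hs.1 hs.2
    exact ⟨t1, t2, hu⟩⟩
  left_inv A := Subtype.ext (skew_eq_Ablk A.2.1 A.2.2.1).symm
  right_inv p := rfl

lemma card_skewInv_eq_sum :
    Nc F (Fin 1 ⊕ κ) = ∑ b : {b : κ → F // b ≠ 0}, Nat.card (Fib (F := F) b.1) := by
  rw [Nc, Nat.card_congr (decompEquiv (F := F) (κ := κ)), Nat.card_eq_fintype_card,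
    Fintype.card_sigma]
  congr 1
  ext b
  rw [Nat.card_eq_fintype_card]

lemma conj_cancel (u : (Matrix κ κ F)ˣ) (C : Matrix κ κ F) :
    (↑u⁻¹ : Matrix κ κ F) * ((↑u : Matrix κ κ F) * C * (↑u : Matrix κ κ F)ᵀ)
      * ((↑u⁻¹ : Matrix κ κ F))ᵀ = C := by
  have h1 : (↑u⁻¹ : Matrix κ κ F) * (↑u : Matrix κ κ F) = 1 := u.inv_mul
  have h2 : ((↑u : Matrix κ κ F))ᵀ * ((↑u⁻¹ : Matrix κ κ F))ᵀ = 1 := by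
    rw [← Matrix.transpose_mul, u.inv_mul, Matrix.transpose_one]
  calc (↑u⁻¹ : Matrix κ κ F) * ((↑u : Matrix κ κ F) * C * (↑u : Matrix κ κ F)ᵀ)
      * ((↑u⁻¹ : Matrix κ κ F))ᵀ
      = ((↑u⁻¹ : Matrix κ κ F) * (↑u : Matrix κ κ F)) * C
        * (((↑u : Matrix κ κ F))ᵀ * ((↑u⁻¹ : Matrix κ κ F))ᵀ) := by
        simp only [Matrix.mul_assoc]
    _ = C := by rw [h1, h2, one_mul, mul_one]

lemma conj_diag_entry (Q C : Matrix κ κ F) (i : κ) :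
    (Q * C * Qᵀ) i i = (Q i) ⬝ᵥ (C *ᵥ Q i) := by
  simp only [Matrix.mul_apply, Matrix.transpose_apply, mulVec, dotProduct,
    Finset.sum_mul, Finset.mul_sum]
  rw [Finset.sum_comm]
  exact Finset.sum_congr rfl fun j _ => Finset.sum_congr rfl fun k _ => by ring

lemma conj_skewInvParts {C : Matrix κ κ F} (Q : Matrix κ κ F)
    (h1 : Cᵀ = -C) (h2 : ∀ i, C i i = 0) :
    (Q * C * Qᵀ)ᵀ = -(Q * C * Qᵀ) ∧ ∀ i, (Q * C * Qᵀ) i i = 0 := by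
  constructor
  · rw [Matrix.transpose_mul, Matrix.transpose_mul, Matrix.transpose_transpose, h1]
    simp [Matrix.mul_assoc]
  · intro i
    rw [conj_diag_entry]
    exact aux_quad_zero h1 h2 _

lemma isUnit_fromBlocks_one (Q : Matrix κ κ F) (hQ : IsUnit Q) :
    IsUnit (fromBlocks 1 0 0 Q : Matrix (Fin 1 ⊕ κ) (Fin 1 ⊕ κ) F) := by
  rw [Matrix.isUnit_iff_isUnit_det, Matrix.det_fromBlocks_zero₁₂]
  simpa using (Matrix.isUnit_iff_isUnit_det Q).mp hQ

/-- conjugation bijection between fibers -/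
noncomputable def fibEquiv (u : (Matrix κ κ F)ˣ) (b : κ → F) :
    Fib (F := F) b ≃ Fib (F := F) ((↑u : Matrix κ κ F) *ᵥ b) where
  toFun C := ⟨(↑u : Matrix κ κ F) * C.1 * (↑u : Matrix κ κ F)ᵀ, by
    obtain ⟨⟨h1, h2⟩, h3⟩ := C.2
    refine ⟨conj_skewInvParts _ h1 h2, ?_⟩
    rw [← Ablk_conj]
    rw [aux_isUnit_conj_iff _ _ (isUnit_fromBlocks_one _ u.isUnit)]
    exact h3⟩
  invFun C := ⟨(↑u⁻¹ : Matrix κ κ F) * C.1 * (↑u⁻¹ : Matrix κ κ F)ᵀ, by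
    obtain ⟨⟨h1, h2⟩, h3⟩ := C.2
    refine ⟨conj_skewInvParts _ h1 h2, ?_⟩
    have hb : (↑u⁻¹ : Matrix κ κ F) *ᵥ ((↑u : Matrix κ κ F) *ᵥ b) = b := by
      rw [Matrix.mulVec_mulVec, u.inv_mul, Matrix.one_mulVec]
    have := (aux_isUnit_conj_iff (fromBlocks 1 0 0 (↑u⁻¹ : Matrix κ κ F))
      (Ablk ((↑u : Matrix κ κ F) *ᵥ b) C.1) (isUnit_fromBlocks_one _ u⁻¹.isUnit)).mpr h3
    rw [Ablk_conj, hb] at this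
    exact this⟩
  left_inv C := Subtype.ext (conj_cancel u C.1)
  right_inv C := Subtype.ext (by
    have h := conj_cancel u ((↑u⁻¹ : Matrix κ κ F) * C.1 * (↑u⁻¹ : Matrix κ κ F)ᵀ)
    -- we need u * (u⁻¹ C u⁻ᵀ) * uᵀ = C
    have h1 : ((↑u⁻¹ : Matrix κ κ F))ᵀ * ((↑u : Matrix κ κ F))ᵀ = 1 := by
      rw [← Matrix.transpose_mul, u.mul_inv, Matrix.transpose_one]
    calc (↑u : Matrix κ κ F) * ((↑u⁻¹ : Matrix κ κ F) * C.1 * (↑u⁻¹ : Matrix κ κ F)ᵀ)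
        * ((↑u : Matrix κ κ F))ᵀ
        = ((↑u : Matrix κ κ F) * (↑u⁻¹ : Matrix κ κ F)) * C.1
          * (((↑u⁻¹ : Matrix κ κ F))ᵀ * ((↑u : Matrix κ κ F))ᵀ) := by
          simp only [Matrix.mul_assoc]
      _ = C.1 := by rw [u.mul_inv, h1, one_mul, mul_one])

lemma fib_card_eq {b b' : κ → F} (hb : b ≠ 0) (hb' : b' ≠ 0) :
    Nat.card (Fib (F := F) b) = Nat.card (Fib (F := F) b') := by
  obtain ⟨Q, hQ, hQb⟩ := aux_exists_isUnit_mulVec (F := F) hb hb'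
  have := Nat.card_congr (fibEquiv (F := F) hQ.unit b)
  rwa [IsUnit.unit_spec, hQb] at this

/-- the fiber over `e0vec` -/
noncomputable def fibE0Equiv {μ : Type*} [Fintype μ] [DecidableEq μ] :
    Fib (F := F) (e0vec μ F) ≃ ((μ → F) × {D : Matrix μ μ F // SkewInv D}) where
  toFun C := ⟨fun j => C.1 (Sum.inr j) (Sum.inl 0),
    ⟨C.1.submatrix Sum.inr Sum.inr, by
      obtain ⟨⟨h1, h2⟩, h3⟩ := C.2
      refine ⟨?_, ?_, ?_⟩
      · ext i j
        have := congrFun (congrFun h1 (Sum.inr i)) (Sum.inr j)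
        simpa using this
      · intro i
        simpa using h2 (Sum.inr i)
      · rw [← isUnit_Ablk_e0 (fun i => C.1 (Sum.inr i) (Sum.inl 0)), ← skew_eq_Ablk h1 h2]
        exact h3⟩⟩
  invFun p := ⟨Ablk p.1 p.2.1, by
    obtain ⟨h1, h2, h3⟩ := p.2.2
    refine ⟨Ablk_skew h1 h2, ?_⟩
    exact (isUnit_Ablk_e0 p.1 p.2.1).mpr h3⟩
  left_inv C := Subtype.ext (skew_eq_Ablk C.2.1.1 C.2.1.2).symm
  right_inv p := rfl

lemma card_fibE0 {μ : Type*} [Fintype μ] [DecidableEq μ] :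
    Nat.card (Fib (F := F) (e0vec μ F)) = Fintype.card F ^ Fintype.card μ * Nc F μ := by
  rw [Nat.card_congr (fibE0Equiv (F := F) (μ := μ)), Nat.card_prod, Nc]
  congr 1
  rw [Nat.card_fun, Nat.card_eq_fintype_card, Nat.card_eq_fintype_card]

lemma card_nonzero_vectors :
    Nat.card {b : κ → F // b ≠ 0} = Fintype.card F ^ Fintype.card κ - 1 := by
  rw [Nat.card_eq_fintype_card]
  have := Fintype.card_subtype_compl (α := κ → F) (fun b => b = 0)
  have h0 : Fintype.card {b : κ → F // b = 0} = 1 := Fintype.card_subtype_eq _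
  rw [h0] at this
  calc Fintype.card {b : κ → F // b ≠ 0}
      = Fintype.card {b : κ → F // ¬(b = 0)} := by congr 1
    _ = Fintype.card (κ → F) - 1 := this
    _ = Fintype.card F ^ Fintype.card κ - 1 := by rw [Fintype.card_fun]

lemma Nc_rec {μ : Type*} [Fintype μ] [DecidableEq μ] :
    Nc F (Fin 1 ⊕ (Fin 1 ⊕ μ))
      = (Fintype.card F ^ (Fintype.card μ + 1) - 1)
        * (Fintype.card F ^ Fintype.card μ * Nc F μ) := by
  rw [card_skewInv_eq_sum]
  have hconst : ∀ b : {b : (Fin 1 ⊕ μ) → F // b ≠ 0},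
      Nat.card (Fib (F := F) b.1) = Fintype.card F ^ Fintype.card μ * Nc F μ := by
    intro b
    rw [fib_card_eq (F := F) b.2 (e0vec_ne_zero (μ := μ)), card_fibE0]
  rw [Finset.sum_congr rfl (fun b _ => hconst b), Finset.sum_const, Finset.card_univ,
    ← Nat.card_eq_fintype_card, card_nonzero_vectors, smul_eq_mul]
  congr 2
  simp [add_comm]

lemma Nc_zero : Nc F (Fin 0) = 1 := by
  rw [Nc, Nat.card_eq_one_iff_unique]
  constructor
  · constructor
    intro A B
    apply Subtype.ext
    ext i j
    exact i.elim0
  · refine ⟨0, ?_, fun i => i.elim0, ?_⟩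
    · ext i j; exact i.elim0
    · rw [Matrix.isUnit_iff_isUnit_det, Matrix.det_isEmpty]; exact isUnit_one

lemma Nc_fin_rec (m : ℕ) :
    Nc F (Fin (m + 2))
      = (Fintype.card F ^ (m + 1) - 1) * (Fintype.card F ^ m * Nc F (Fin m)) := by
  have e : Fin (m + 2) ≃ Fin 1 ⊕ (Fin 1 ⊕ Fin m) :=
    (finCongr (by omega : m + 2 = 1 + (1 + m))).trans <|
      (finSumFinEquiv (m := 1) (n := 1 + m)).symm.trans <|
        Equiv.sumCongr (Equiv.refl _) (finSumFinEquiv (m := 1) (n := m)).symm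
  rw [Nc_reindex (F := F) e, Nc_rec]
  simp [Fintype.card_fin]

lemma Nc_even (m : ℕ) :
    Nc F (Fin (2 * m)) = Fintype.card F ^ (m * (m - 1))
      * ∏ i ∈ Finset.range m, (Fintype.card F ^ (2 * i + 1) - 1) := by
  induction m with
  | zero => simpa using Nc_zero (F := F)
  | succ m ih =>
    have h1 : Nc F (Fin (2 * (m + 1))) = Nc F (Fin (2 * m + 2)) :=
      Nc_reindex (finCongr (by omega))
    rw [h1, Nc_fin_rec, ih, Finset.prod_range_succ]
    have h2 : (m + 1) * (m + 1 - 1) = 2 * m + m * (m - 1) := by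
      cases m with
      | zero => simp
      | succ k => simp only [Nat.add_sub_cancel]; ring
    rw [h2, pow_add]
    ring

end Counting

/-- For `n` even, the number of `n × n` skew-symmetric (alternating) matrices over `GF(q)`
of full rank `n` equals `q^(n(n-2)/4) ⋅ ∏_{i=0}^{(n-2)/2} (q^(2i+1) - 1)`. -/
theorem card_full_rank_alternating_matrices {q n : ℕ} (hn : 2 ≤ n) (heven : Even n)
    {F : Type*} [Field F] [Fintype F] (hF : Fintype.card F = q) :
    Set.ncard {A : Matrix (Fin n) (Fin n) F |
        Matrix.transpose A = -A ∧ (∀ i, A i i = 0) ∧ A.rank = n} =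
      q ^ (n * (n - 2) / 4) * ∏ i ∈ Finset.range (n / 2), (q ^ (2 * i + 1) - 1) := by
  classical
  subst hF
  obtain ⟨m, hm⟩ := heven
  have hm2 : n = 2 * m := by omega
  have hset : {A : Matrix (Fin n) (Fin n) F |
      Matrix.transpose A = -A ∧ (∀ i, A i i = 0) ∧ A.rank = n}
      = {A : Matrix (Fin n) (Fin n) F | SkewInv A} := by
    ext A
    simp only [Set.mem_setOf_eq, SkewInv]
    constructor
    · rintro ⟨h1, h2, h3⟩
      exact ⟨h1, h2, (aux_rank_eq_card_iff_isUnit A).mp h3⟩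
    · rintro ⟨h1, h2, h3⟩
      exact ⟨h1, h2, (aux_rank_eq_card_iff_isUnit A).mpr h3⟩
  rw [hset, ← Nat.card_coe_set_eq]
  have hcard : Nat.card {A : Matrix (Fin n) (Fin n) F | SkewInv A}
      = Nc F (Fin n) := by
    rw [Nc]
    apply Nat.card_congr
    exact Equiv.refl _
  rw [hcard]
  subst hm2
  rw [Nc_even]
  have e1 : 2 * m * (2 * m - 2) / 4 = m * (m - 1) := by
    obtain ⟨k, rfl⟩ : ∃ k, m = k + 1 := ⟨m - 1, by omega⟩
    have : 2 * (k + 1) * (2 * (k + 1) - 2) = 4 * ((k + 1) * k) := by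
      have h : 2 * (k + 1) - 2 = 2 * k := by omega
      rw [h]; ring
    rw [this, Nat.mul_div_cancel_left _ (by norm_num)]
    simp
  have e2 : 2 * m / 2 = m := by omega
  rw [e1, e2]
end

section
/- For n odd, the number of n×n skew-symmetric (alternating) matrices over GF(q) of rank n-1 equals q^{(n-1)(n-3)/4} · ∏_{i=1}^{(n-1)/2} (q^{2i+1} - 1). -/
open Matrix

namespace CardAlt
variable {F : Type*} [Field F] {m : ℕ}

lemma qform_zero (B : Matrix (Fin m) (Fin m) F) (x : Fin m → F) (halt : Bᵀ = -B)
    (hdiag : ∀ i, B i i = 0) : x ⬝ᵥ B *ᵥ x = 0 := by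
  have hskew : ∀ i j, B j i = -B i j := fun i j => by
    have := congrFun (congrFun halt i) j; simpa [Matrix.transpose_apply] using this
  simp only [dotProduct, Matrix.mulVec, dotProduct, Finset.mul_sum]
  rw [← Finset.sum_product']
  apply Finset.sum_involution (fun p _ => (p.2, p.1))
  · intro ⟨i,j⟩ _
    simp only
    rw [hskew j i]
    ring
  · intro ⟨i,j⟩ _ hf
    simp only [ne_eq, Prod.mk.injEq]
    rintro ⟨rfl, -⟩
    exact hf (by simp [hdiag])
  · intros; simp
  · intros; rfl

lemma mem_range_of_dual (B : Matrix (Fin m) (Fin m) F) (c : Fin m → F)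
    (h : ∀ y, Bᵀ *ᵥ y = 0 → c ⬝ᵥ y = 0) : c ∈ LinearMap.range B.mulVecLin := by
  classical
  set B' : Matrix (Fin m) (Fin m ⊕ Fin 1) F := Matrix.of (fun i => Sum.elim (B i) (fun _ => c i)) with hB'
  have hcol : ∀ v : Fin m ⊕ Fin 1 → F, B' *ᵥ v = B *ᵥ (v ∘ Sum.inl) + (v (Sum.inr 0)) • c := by
    intro v
    funext i
    simp [B', Matrix.mulVec, dotProduct, Fintype.sum_sum_type, mul_comm]
  have hker : LinearMap.ker B'ᵀ.mulVecLin = LinearMap.ker Bᵀ.mulVecLin := by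
    ext y
    simp only [LinearMap.mem_ker, mulVecLin_apply]
    constructor
    · intro hy
      funext i
      have := congrFun hy (Sum.inl i)
      simpa [B', Matrix.mulVec, dotProduct, Matrix.transpose_apply] using this
    · intro hy
      funext i
      rcases i with i | i
      · have := congrFun hy i
        simpa [B', Matrix.mulVec, dotProduct, Matrix.transpose_apply] using this
      · have hcy := h y hy
        simpa [B', Matrix.mulVec, dotProduct, Matrix.transpose_apply] using hcy
  have hrank : B'.rank = B.rank := by
    rw [← Matrix.rank_transpose B', ← Matrix.rank_transpose B]
    have h1 := LinearMap.finrank_range_add_finrank_ker (B'ᵀ.mulVecLin)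
    have h2 := LinearMap.finrank_range_add_finrank_ker (Bᵀ.mulVecLin)
    rw [hker] at h1
    unfold Matrix.rank
    omega
  have hle : LinearMap.range B.mulVecLin ≤ LinearMap.range B'.mulVecLin := by
    rintro z ⟨y, rfl⟩
    exact ⟨Sum.elim y 0, by simp [hcol]⟩
  have heq : LinearMap.range B.mulVecLin = LinearMap.range B'.mulVecLin :=
    Submodule.eq_of_le_of_finrank_le hle (le_of_eq hrank)
  rw [heq]
  exact ⟨Sum.elim 0 1, by simp [hcol]⟩

def Abor (B : Matrix (Fin m) (Fin m) F) (c : Fin m → F) :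
    Matrix (Fin m ⊕ Fin 1) (Fin m ⊕ Fin 1) F :=
  Matrix.fromBlocks B (Matrix.of fun i _ => c i) (Matrix.of fun _ j => -c j) 0

lemma Abor_mulVec (B : Matrix (Fin m) (Fin m) F) (c : Fin m → F) (v : Fin m ⊕ Fin 1 → F) :
    Abor B c *ᵥ v = Sum.elim (B *ᵥ (v ∘ Sum.inl) + (v (Sum.inr 0)) • c)
      (fun _ => -(c ⬝ᵥ (v ∘ Sum.inl))) := by
  have hv : v = Sum.elim (v ∘ Sum.inl) (v ∘ Sum.inr) := by funext i; cases i <;> rfl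
  nth_rewrite 1 [hv]
  rw [Abor, fromBlocks_mulVec]
  funext i
  rcases i with i | j
  · simp [Matrix.mulVec, dotProduct, Fin.sum_univ_succ, mul_comm]
  · simp [Matrix.mulVec, dotProduct, neg_mul]

lemma mulVec_dot (B : Matrix (Fin m) (Fin m) F) (y x : Fin m → F) :
    (B *ᵥ y) ⬝ᵥ x = y ⬝ᵥ (Bᵀ *ᵥ x) := by
  simp [dotProduct, Matrix.mulVec, Finset.sum_mul, Finset.mul_sum]
  rw [Finset.sum_comm]
  apply Finset.sum_congr rfl; intros; apply Finset.sum_congr rfl; intros; ring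

lemma finrank_sup_span_singleton {V : Type*} [AddCommGroup V] [Module F V]
    [FiniteDimensional F V] (s : Submodule F V) {x : V} (hx : x ∉ s) :
    Module.finrank F ↥(s ⊔ (F ∙ x)) = Module.finrank F s + 1 := by
  have hd : Disjoint s (F ∙ x) := Submodule.disjoint_span_singleton.2 (fun h => absurd h hx)
  have hx0 : x ≠ 0 := fun h => hx (h ▸ s.zero_mem)
  have := Submodule.finrank_sup_add_finrank_inf_eq s (F ∙ x)
  rw [hd.eq_bot, finrank_bot, add_zero, finrank_span_singleton hx0] at this
  exact this

lemma rank_Abor_mem (B : Matrix (Fin m) (Fin m) F) (x : Fin m → F)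
    (halt : Bᵀ = -B) (hcx : (B *ᵥ x) ⬝ᵥ x = 0) :
    (Abor B (B *ᵥ x)).rank = B.rank := by
  classical
  set c := B *ᵥ x with hc
  let ιx : (Fin m → F) →ₗ[F] (Fin m ⊕ Fin 1 → F) :=
    { toFun := fun w => Sum.elim w (fun _ => w ⬝ᵥ x)
      map_add' := by intro a b; funext i; cases i <;> simp [add_dotProduct]
      map_smul' := by intro r a; funext i; cases i <;> simp [smul_dotProduct] }
  have hinj : Function.Injective ιx := by
    intro a b hab
    funext i
    exact congrFun hab (Sum.inl i)
  have hdot : ∀ y : Fin m → F, (B *ᵥ y) ⬝ᵥ x = -(c ⬝ᵥ y) := by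
    intro y
    rw [mulVec_dot, halt]
    rw [Matrix.neg_mulVec]; simp [dotProduct_comm, hc]
  have hrange : LinearMap.range (Abor B c).mulVecLin
      = Submodule.map ιx (LinearMap.range B.mulVecLin) := by
    apply le_antisymm
    · rintro z ⟨v, rfl⟩
      refine ⟨B *ᵥ ((v ∘ Sum.inl) + (v (Sum.inr 0)) • x), ⟨_, rfl⟩, ?_⟩
      rw [mulVecLin_apply, Abor_mulVec]
      funext i
      rcases i with i | j
      · simp [ιx, Matrix.mulVec_add, Matrix.mulVec_smul, hc]
      · simp only [ιx, LinearMap.coe_mk, AddHom.coe_mk, Sum.elim_inr]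
        rw [Matrix.mulVec_add, Matrix.mulVec_smul, add_dotProduct, smul_dotProduct, hdot, hcx]
        simp
    · rintro z ⟨w, ⟨y, rfl⟩, rfl⟩
      refine ⟨Sum.elim y 0, ?_⟩
      rw [mulVecLin_apply, Abor_mulVec]
      funext i
      rcases i with i | j
      · simp [ιx]
      · simp only [ιx, LinearMap.coe_mk, AddHom.coe_mk, Sum.elim_inr, mulVecLin_apply]
        rw [hdot]
        simp
  rw [Matrix.rank, hrange]
  exact (LinearEquiv.finrank_eq (Submodule.equivMapOfInjective ιx hinj _)).symm

lemma rank_Abor_not_mem (B : Matrix (Fin m) (Fin m) F) (c : Fin m → F)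
    (y₀ : Fin m → F) (hy₀ : B *ᵥ y₀ = 0) (hcy₀ : c ⬝ᵥ y₀ = 1)
    (hc : c ∉ LinearMap.range B.mulVecLin) :
    (Abor B c).rank = B.rank + 2 := by
  classical
  let ι₁ : (Fin m → F) →ₗ[F] (Fin m ⊕ Fin 1 → F) :=
    { toFun := fun w => Sum.elim w 0
      map_add' := by intro a b; funext i; cases i <;> simp
      map_smul' := by intro r a; funext i; cases i <;> simp }
  have hι₁inj : Function.Injective ι₁ := fun a b hab => funext fun i => congrFun hab (Sum.inl i)
  set e : Fin m ⊕ Fin 1 → F := Sum.elim 0 (fun _ => 1) with he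
  set U : Submodule F (Fin m → F) := LinearMap.range B.mulVecLin ⊔ (F ∙ c) with hU
  have key : ∀ (y : Fin m → F) (t : F),
      Abor B c *ᵥ (Sum.elim y (fun _ => t)) = ι₁ (B *ᵥ y + t • c) + (-(c ⬝ᵥ y)) • e := by
    intro y t
    rw [Abor_mulVec]
    funext i
    rcases i with i | j
    · simp [ι₁, e]
    · simp [ι₁, e]
  have hrange : LinearMap.range (Abor B c).mulVecLin = Submodule.map ι₁ U ⊔ (F ∙ e) := by
    apply le_antisymm
    · rintro z ⟨v, rfl⟩
      rw [mulVecLin_apply]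
      have hv : v = Sum.elim (v ∘ Sum.inl) (fun _ => v (Sum.inr 0)) := by
        funext i
        rcases i with i | j
        · rfl
        · simp [Fin.eq_zero j]
      rw [hv, key]
      apply Submodule.add_mem_sup
      · exact ⟨_, Submodule.add_mem_sup ⟨_, rfl⟩ (Submodule.smul_mem _ _ (Submodule.mem_span_singleton_self c)), rfl⟩
      · exact Submodule.smul_mem _ _ (Submodule.mem_span_singleton_self e)
    · have hemem : e ∈ LinearMap.range (Abor B c).mulVecLin := by
        refine ⟨Sum.elim (-y₀) (fun _ => 0), ?_⟩
        rw [mulVecLin_apply, key]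
        simp [Matrix.mulVec_neg, hy₀, hcy₀, ι₁, he]
      apply sup_le _ ((Submodule.span_singleton_le_iff_mem _ _).2 hemem)
      rw [hU, Submodule.map_sup]
      apply sup_le
      · rintro z ⟨w, ⟨y, rfl⟩, rfl⟩
        have : ι₁ (B.mulVecLin y) =
            Abor B c *ᵥ (Sum.elim y (fun _ => 0)) + (c ⬝ᵥ y) • e := by
          rw [key]
          simp [ι₁]
        rw [this]
        exact Submodule.add_mem _ ⟨_, rfl⟩ (Submodule.smul_mem _ _ hemem)
      · rw [Submodule.map_span, Set.image_singleton]
        refine (Submodule.span_singleton_le_iff_mem _ _).2 ⟨Sum.elim 0 (fun _ => 1), ?_⟩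
        rw [mulVecLin_apply, key]
        simp
  have henotmem : e ∉ Submodule.map ι₁ U := by
    rintro ⟨u, -, hu⟩
    have := congrFun hu (Sum.inr 0)
    simp [ι₁, he] at this
  have hcne : c ∉ (LinearMap.range B.mulVecLin : Submodule F (Fin m → F)) := hc
  rw [Matrix.rank, hrange, finrank_sup_span_singleton _ henotmem]
  have h1 : Module.finrank F (Submodule.map ι₁ U) = Module.finrank F U :=
    (LinearEquiv.finrank_eq (Submodule.equivMapOfInjective ι₁ hι₁inj _)).symm
  rw [h1, hU, finrank_sup_span_singleton _ hcne]
  rfl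

/-- The key rank dichotomy. -/
lemma rank_Abor_eq_iff (B : Matrix (Fin m) (Fin m) F) (c : Fin m → F)
    (halt : Bᵀ = -B) (hdiag : ∀ i, B i i = 0) (r : ℕ) :
    (Abor B c).rank = r ↔ ((c ∈ LinearMap.range B.mulVecLin ∧ B.rank = r) ∨
      (c ∉ LinearMap.range B.mulVecLin ∧ B.rank + 2 = r)) := by
  by_cases hc : c ∈ LinearMap.range B.mulVecLin
  · obtain ⟨x, hx⟩ := hc
    have hr : (Abor B c).rank = B.rank := by
      rw [← hx]
      exact rank_Abor_mem B x halt
        (by rw [dotProduct_comm]; exact qform_zero B x halt hdiag)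
    rw [hr]
    constructor
    · intro h; exact Or.inl ⟨⟨x, hx⟩, h⟩
    · rintro (⟨-, h⟩ | ⟨h, -⟩)
      · exact h
      · exact absurd ⟨x, hx⟩ h
  · have : ¬ (∀ y, Bᵀ *ᵥ y = 0 → c ⬝ᵥ y = 0) := fun h => hc (mem_range_of_dual B c h)
    push_neg at this
    obtain ⟨y, hy, hcy⟩ := this
    have hBy : B *ᵥ y = 0 := by
      have : (-B) *ᵥ y = 0 := by rw [← halt]; exact hy
      rw [Matrix.neg_mulVec, neg_eq_zero] at this
      exact this
    have hr : (Abor B c).rank = B.rank + 2 := by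
      refine rank_Abor_not_mem B c ((c ⬝ᵥ y)⁻¹ • y) ?_ ?_ hc
      · rw [Matrix.mulVec_smul, hBy, smul_zero]
      · rw [dotProduct_smul, smul_eq_mul, inv_mul_cancel₀ hcy]
    rw [hr]
    constructor
    · intro h; exact Or.inr ⟨hc, h⟩
    · rintro (⟨h, -⟩ | ⟨-, h⟩)
      · exact absurd h hc
      · exact h



variable (F) in
noncomputable def cnt (m r : ℕ) : ℕ :=
  Nat.card {A : Matrix (Fin m) (Fin m) F // Aᵀ = -A ∧ (∀ i, A i i = 0) ∧ A.rank = r}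

lemma cnt_rank_zero [Fintype F] (m : ℕ) : cnt F m 0 = 1 := by
  rw [cnt]
  have : ∀ A : Matrix (Fin m) (Fin m) F,
      (Aᵀ = -A ∧ (∀ i, A i i = 0) ∧ A.rank = 0) ↔ A = 0 := by
    intro A
    constructor
    · rintro ⟨-, -, hr⟩
      have h0 : LinearMap.range A.mulVecLin = ⊥ := Submodule.finrank_eq_zero.1 hr
      have hv : ∀ v, A *ᵥ v = 0 := by
        intro v
        have : A.mulVecLin v ∈ LinearMap.range A.mulVecLin := ⟨v, rfl⟩
        rw [h0] at this
        simpa using this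
      ext i j
      have := congrFun (hv (Pi.single j 1)) i
      simpa [Matrix.mulVec_single] using this
    · rintro rfl
      refine ⟨by simp, by simp, ?_⟩
      simp [Matrix.rank_zero]
  have e : {A : Matrix (Fin m) (Fin m) F // Aᵀ = -A ∧ (∀ i, A i i = 0) ∧ A.rank = 0}
      ≃ {A : Matrix (Fin m) (Fin m) F // A = 0} :=
    Equiv.subtypeEquiv (Equiv.refl _) (by simpa using this)
  rw [Nat.card_congr e]
  simp [Nat.card_eq_fintype_card]

lemma cnt_eq_zero_of_gt (m r : ℕ) (h : m < r) : cnt F m r = 0 := by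
  rw [cnt, Nat.card_eq_zero]
  left
  constructor
  rintro ⟨A, -, -, hr⟩
  have := Matrix.rank_le_card_width A
  simp only [Fintype.card_fin] at this
  omega

lemma card_prod_subtype {α β : Type*} [Fintype α] [Fintype β]
    (P : α → Prop) (Q : α → β → Prop) (k : ℕ)
    (hk : ∀ a, P a → Nat.card {b // Q a b} = k) :
    Nat.card {p : α × β // P p.1 ∧ Q p.1 p.2} = Nat.card {a // P a} * k := by
  classical
  have e1 : {p : α × β // P p.1 ∧ Q p.1 p.2} ≃ Σ a : α, {b // P a ∧ Q a b} :=
    Equiv.subtypeProdEquivSigmaSubtype (fun a b => P a ∧ Q a b)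
  rw [Nat.card_congr e1, Nat.card_eq_fintype_card, Fintype.card_sigma]
  have : ∀ a : α, Fintype.card {b // P a ∧ Q a b}
      = if P a then Nat.card {b // Q a b} else 0 := by
    intro a
    by_cases hPa : P a
    · rw [if_pos hPa, Nat.card_eq_fintype_card]
      exact Fintype.card_congr (Equiv.subtypeEquiv (Equiv.refl _) (by tauto))
    · rw [if_neg hPa, Fintype.card_eq_zero_iff]
      exact ⟨fun b => hPa b.2.1⟩
  rw [Finset.sum_congr rfl (fun a _ => this a)]
  rw [Finset.sum_ite, Finset.sum_const_zero, add_zero, Finset.sum_congr rfl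
    (fun a ha => hk a (by simpa using (Finset.mem_filter.1 ha).2)), Finset.sum_const]
  rw [Nat.card_eq_fintype_card, Fintype.card_subtype]
  simp [mul_comm]

lemma card_mem_range [Fintype F] (B : Matrix (Fin m) (Fin m) F) :
    Nat.card {c : Fin m → F // c ∈ LinearMap.range B.mulVecLin} = Fintype.card F ^ B.rank := by
  classical
  rw [Nat.card_eq_fintype_card]
  exact Module.card_eq_pow_finrank (K := F) (V := ↥(LinearMap.range B.mulVecLin))

lemma card_not_mem_range [Fintype F] (B : Matrix (Fin m) (Fin m) F) :
    Nat.card {c : Fin m → F // c ∉ LinearMap.range B.mulVecLin}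
      = Fintype.card F ^ m - Fintype.card F ^ B.rank := by
  classical
  rw [Nat.card_eq_fintype_card, Fintype.card_subtype_compl, ← card_mem_range B,
    Nat.card_eq_fintype_card]
  congr 1
  rw [Fintype.card_fun, Fintype.card_fin]

lemma eq_Abor_of_alt (A : Matrix (Fin m ⊕ Fin 1) (Fin m ⊕ Fin 1) F)
    (halt : Aᵀ = -A) (hdiag : ∀ i, A i i = 0) :
    A = Abor (Matrix.of fun i j => A (Sum.inl i) (Sum.inl j))
        (fun i => A (Sum.inl i) (Sum.inr 0)) := by
  have hskew : ∀ i j, A j i = -A i j := fun i j => by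
    have := congrFun (congrFun halt i) j; simpa [Matrix.transpose_apply] using this
  funext i j
  rcases i with i | i <;> rcases j with j | j
  · rfl
  · rw [Fin.eq_zero j]; rfl
  · rw [Fin.eq_zero i]
    show A (Sum.inr 0) (Sum.inl j) = -A (Sum.inl j) (Sum.inr 0)
    exact hskew _ _
  · rw [Fin.eq_zero i, Fin.eq_zero j]
    show A (Sum.inr 0) (Sum.inr 0) = 0
    exact hdiag _

lemma Abor_alt (B : Matrix (Fin m) (Fin m) F) (c : Fin m → F)
    (halt : Bᵀ = -B) (hdiag : ∀ i, B i i = 0) :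
    (Abor B c)ᵀ = -(Abor B c) ∧ ∀ i, Abor B c i i = 0 := by
  have hskew : ∀ i j, B j i = -B i j := fun i j => by
    have := congrFun (congrFun halt i) j; simpa [Matrix.transpose_apply] using this
  constructor
  · funext i j
    rcases i with i | i <;> rcases j with j | j
    · show B j i = -B i j
      exact hskew _ _
    · show -c i = -(c i)
      rfl
    · show c j = -(-c j)
      rw [neg_neg]
    · show (0 : F) = -0
      rw [neg_zero]
  · intro i
    rcases i with i | i
    · exact hdiag i
    · rfl

/-- The pair equivalence. -/
noncomputable def pairEquiv (r : ℕ) :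
    {A : Matrix (Fin m ⊕ Fin 1) (Fin m ⊕ Fin 1) F // Aᵀ = -A ∧ (∀ i, A i i = 0) ∧ A.rank = r} ≃
    {p : Matrix (Fin m) (Fin m) F × (Fin m → F) //
      (p.1ᵀ = -p.1 ∧ ∀ i, p.1 i i = 0) ∧
      ((p.2 ∈ LinearMap.range p.1.mulVecLin ∧ p.1.rank = r) ∨
       (p.2 ∉ LinearMap.range p.1.mulVecLin ∧ p.1.rank + 2 = r))} where
  toFun := fun ⟨A, hA⟩ => by
    refine ⟨(Matrix.of fun i j => A (Sum.inl i) (Sum.inl j),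
        fun i => A (Sum.inl i) (Sum.inr 0)), ?_, ?_⟩
    · constructor
      · funext i j
        show A (Sum.inl j) (Sum.inl i) = -A (Sum.inl i) (Sum.inl j)
        have := congrFun (congrFun hA.1 (Sum.inl i)) (Sum.inl j)
        simpa [Matrix.transpose_apply] using this
      · intro i
        exact hA.2.1 (Sum.inl i)
    · have halt : (Matrix.of fun i j => A (Sum.inl i) (Sum.inl j))ᵀ
          = -(Matrix.of fun i j => A (Sum.inl i) (Sum.inl j)) := by
        funext i j
        show A (Sum.inl j) (Sum.inl i) = -A (Sum.inl i) (Sum.inl j)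
        have := congrFun (congrFun hA.1 (Sum.inl i)) (Sum.inl j)
        simpa [Matrix.transpose_apply] using this
      have hdiag : ∀ i, (Matrix.of fun i j => A (Sum.inl i) (Sum.inl j)) i i = 0 :=
        fun i => hA.2.1 (Sum.inl i)
      rw [← rank_Abor_eq_iff _ _ halt hdiag, ← eq_Abor_of_alt A hA.1 hA.2.1]
      exact hA.2.2
  invFun := fun ⟨(B, c), hp⟩ => by
    refine ⟨Abor B c, (Abor_alt B c hp.1.1 hp.1.2).1, (Abor_alt B c hp.1.1 hp.1.2).2, ?_⟩
    rw [rank_Abor_eq_iff _ _ hp.1.1 hp.1.2]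
    exact hp.2
  left_inv := fun ⟨A, hA⟩ => by
    simp only [Subtype.mk.injEq]
    exact (eq_Abor_of_alt A hA.1 hA.2.1).symm
  right_inv := fun ⟨(B, c), hp⟩ => by
    rfl

lemma alt_iff_reindex (A : Matrix (Fin m ⊕ Fin 1) (Fin m ⊕ Fin 1) F) (k : ℕ) :
    (Aᵀ = -A ∧ (∀ i, A i i = 0) ∧ A.rank = k) ↔
    ((Matrix.reindex finSumFinEquiv finSumFinEquiv A)ᵀ
        = -(Matrix.reindex finSumFinEquiv finSumFinEquiv A) ∧
      (∀ i, (Matrix.reindex finSumFinEquiv finSumFinEquiv A) i i = 0) ∧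
      (Matrix.reindex finSumFinEquiv finSumFinEquiv A).rank = k) := by
  have hneg : -(Matrix.reindex finSumFinEquiv finSumFinEquiv A)
      = Matrix.reindex finSumFinEquiv finSumFinEquiv (-A) := by
    funext i j
    simp
  rw [Matrix.transpose_reindex, hneg, (Matrix.reindex finSumFinEquiv finSumFinEquiv).injective.eq_iff,
    Matrix.rank_reindex]
  have hdiag : (∀ i, (Matrix.reindex finSumFinEquiv finSumFinEquiv A) i i = 0)
      ↔ (∀ i, A i i = 0) := by
    constructor
    · intro h i
      simpa using h (finSumFinEquiv i)
    · intro h i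
      simpa using h (finSumFinEquiv.symm i)
  rw [hdiag]

lemma cnt_succ_card [Fintype F] (m k : ℕ) :
    cnt F (m+1) k =
      Nat.card {A : Matrix (Fin m ⊕ Fin 1) (Fin m ⊕ Fin 1) F //
        Aᵀ = -A ∧ (∀ i, A i i = 0) ∧ A.rank = k} := by
  rw [cnt]
  exact (Nat.card_congr (Equiv.subtypeEquiv
    (Matrix.reindex finSumFinEquiv finSumFinEquiv) (fun A => alt_iff_reindex A k))).symm

lemma cnt_succ [Fintype F] (m r : ℕ) :
    cnt F (m+1) (r+2) = cnt F m (r+2) * Fintype.card F ^ (r+2)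
      + cnt F m r * (Fintype.card F ^ m - Fintype.card F ^ r) := by
  classical
  rw [cnt_succ_card, Nat.card_congr (pairEquiv (r+2))]
  have e1 : {p : Matrix (Fin m) (Fin m) F × (Fin m → F) //
      (p.1ᵀ = -p.1 ∧ ∀ i, p.1 i i = 0) ∧
      ((p.2 ∈ LinearMap.range p.1.mulVecLin ∧ p.1.rank = r + 2) ∨
       (p.2 ∉ LinearMap.range p.1.mulVecLin ∧ p.1.rank + 2 = r + 2))} ≃
      {p : Matrix (Fin m) (Fin m) F × (Fin m → F) //
      ((fun p : Matrix (Fin m) (Fin m) F × (Fin m → F) =>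
          (p.1ᵀ = -p.1 ∧ (∀ i, p.1 i i = 0) ∧ p.1.rank = r + 2) ∧
          p.2 ∈ LinearMap.range p.1.mulVecLin) p) ∨
      ((fun p : Matrix (Fin m) (Fin m) F × (Fin m → F) =>
          (p.1ᵀ = -p.1 ∧ (∀ i, p.1 i i = 0) ∧ p.1.rank = r) ∧
          p.2 ∉ LinearMap.range p.1.mulVecLin) p)} := by
    refine Equiv.subtypeEquiv (Equiv.refl _) (fun p => ?_)
    simp only [Equiv.refl_apply]
    constructor
    · rintro ⟨⟨h1, h2⟩, (⟨h3, h4⟩ | ⟨h3, h4⟩)⟩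
      · exact Or.inl ⟨⟨h1, h2, h4⟩, h3⟩
      · exact Or.inr ⟨⟨h1, h2, by omega⟩, h3⟩
    · rintro (⟨⟨h1, h2, h4⟩, h3⟩ | ⟨⟨h1, h2, h4⟩, h3⟩)
      · exact ⟨⟨h1, h2⟩, Or.inl ⟨h3, h4⟩⟩
      · exact ⟨⟨h1, h2⟩, Or.inr ⟨h3, by omega⟩⟩
  rw [Nat.card_congr e1]
  have hdisj : Disjoint
      (fun p : Matrix (Fin m) (Fin m) F × (Fin m → F) =>
          (p.1ᵀ = -p.1 ∧ (∀ i, p.1 i i = 0) ∧ p.1.rank = r + 2) ∧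
          p.2 ∈ LinearMap.range p.1.mulVecLin)
      (fun p : Matrix (Fin m) (Fin m) F × (Fin m → F) =>
          (p.1ᵀ = -p.1 ∧ (∀ i, p.1 i i = 0) ∧ p.1.rank = r) ∧
          p.2 ∉ LinearMap.range p.1.mulVecLin) := by
    rw [Pi.disjoint_iff]
    intro p
    rw [Prop.disjoint_iff]
    rintro ⟨⟨-, h1⟩, ⟨-, h2⟩⟩
    exact h2 h1
  rw [Nat.card_congr (subtypeOrEquiv _ _ hdisj), Nat.card_sum]
  congr 1
  · exact card_prod_subtype
      (fun B : Matrix (Fin m) (Fin m) F => Bᵀ = -B ∧ (∀ i, B i i = 0) ∧ B.rank = r + 2)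
      (fun B c => c ∈ LinearMap.range B.mulVecLin) (Fintype.card F ^ (r+2))
      (fun B hB => by rw [card_mem_range B, hB.2.2])
  · exact card_prod_subtype
      (fun B : Matrix (Fin m) (Fin m) F => Bᵀ = -B ∧ (∀ i, B i i = 0) ∧ B.rank = r)
      (fun B c => c ∉ LinearMap.range B.mulVecLin)
      (Fintype.card F ^ m - Fintype.card F ^ r)
      (fun B hB => by rw [card_not_mem_range B, hB.2.2])

/-- Gaussian binomial coefficient (via the q-Pascal recursion). -/
def gb (q : ℕ) : ℕ → ℕ → ℕ
  | 0, 0 => 1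
  | 0, _+1 => 0
  | _+1, 0 => 1
  | m+1, k+1 => gb q m k + q^(k+1) * gb q m (k+1)

/-- Order of the set of nondegenerate alternating forms factor. -/
def G (q s : ℕ) : ℕ := q^(s*(s-1)) * ∏ i ∈ Finset.Icc 1 s, (q^(2*i-1) - 1)

lemma gb_zero_right (q m : ℕ) : gb q m 0 = 1 := by cases m <;> rfl

lemma gb_eq_zero_of_lt (q : ℕ) : ∀ m k, m < k → gb q m k = 0 := by
  intro m
  induction m with
  | zero => intro k hk; match k, hk with | k+1, _ => rfl
  | succ n ih =>
    intro k hk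
    match k, hk with
    | k+1, hk =>
      show gb q n k + q^(k+1) * gb q n (k+1) = 0
      rw [ih k (by omega), ih (k+1) (by omega)]
      simp

lemma prod_form (q : ℕ) (hq : 1 ≤ q) : ∀ m k,
    gb q m k * ∏ i ∈ Finset.range k, (q^(i+1) - 1)
      = ∏ i ∈ Finset.range k, (q^(m-i) - 1) := by
  intro m
  induction m with
  | zero =>
    intro k
    cases k with
    | zero => simp [show gb q 0 0 = 1 from rfl]
    | succ k =>
      rw [gb_eq_zero_of_lt q 0 (k+1) (by omega), zero_mul]
      symm
      apply Finset.prod_eq_zero (Finset.mem_range.2 (Nat.succ_pos k))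
      simp
  | succ m ih =>
    intro k
    cases k with
    | zero => simp [gb_zero_right]
    | succ k =>
      show (gb q m k + q^(k+1) * gb q m (k+1)) * ∏ i ∈ Finset.range (k+1), (q^(i+1) - 1)
          = ∏ i ∈ Finset.range (k+1), (q^(m+1-i) - 1)
      set L := ∏ i ∈ Finset.range k, (q^(i+1) - 1) with hLdef
      have ihk : gb q m k * L = ∏ i ∈ Finset.range k, (q^(m-i) - 1) := ih k
      have ihk1 : gb q m (k+1) * (L * (q^(k+1)-1)) = gb q m k * L * (q^(m-k)-1) := by
        rw [← Finset.prod_range_succ (fun i => q^(i+1)-1) k, ihk,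
          ← Finset.prod_range_succ (fun i => q^(m-i)-1) k]
        exact ih (k+1)
      have hRgoal : ∏ i ∈ Finset.range (k+1), (q^(m+1-i) - 1) = gb q m k * L * (q^(m+1)-1) := by
        rw [Finset.prod_range_succ']
        have : ∏ i ∈ Finset.range k, (q^(m+1-(i+1)) - 1) = gb q m k * L := by
          rw [ihk]
          apply Finset.prod_congr rfl
          intro i _
          congr 2
          omega
        rw [this]
        simp
      rw [hRgoal, Finset.prod_range_succ]
      show (gb q m k + q^(k+1) * gb q m (k+1)) * (L * (q^(k+1)-1)) = gb q m k * L * (q^(m+1)-1)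
      by_cases hkm : k ≤ m
      · have h2 : q^(k+1) ≤ q^(m+1) := Nat.pow_le_pow_right hq (by omega)
        have h3 : 1 ≤ q^(k+1) := Nat.one_le_pow _ _ hq
        have ha : q^(k+1)*(q^(m-k)-1) = q^(m+1) - q^(k+1) := by
          rw [Nat.mul_sub, mul_one, ← pow_add]
          congr 2
          omega
        calc (gb q m k + q^(k+1) * gb q m (k+1)) * (L * (q^(k+1)-1))
            = gb q m k * L * (q^(k+1)-1) + q^(k+1) * (gb q m (k+1) * (L * (q^(k+1)-1))) := by ring
          _ = gb q m k * L * (q^(k+1)-1) + q^(k+1) * (gb q m k * L * (q^(m-k)-1)) := by rw [ihk1]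
          _ = gb q m k * L * (q^(k+1)-1) + gb q m k * L * (q^(k+1)*(q^(m-k)-1)) := by ring
          _ = gb q m k * L * (q^(k+1)-1) + gb q m k * L * (q^(m+1) - q^(k+1)) := by rw [ha]
          _ = gb q m k * L * ((q^(k+1)-1) + (q^(m+1) - q^(k+1))) := by rw [Nat.mul_add]
          _ = gb q m k * L * (q^(m+1)-1) := by congr 1; omega
      · rw [gb_eq_zero_of_lt q m k (by omega), gb_eq_zero_of_lt q m (k+1) (by omega)]
        simp

lemma L_pos (q : ℕ) (hq : 2 ≤ q) (k : ℕ) : 0 < ∏ i ∈ Finset.range k, (q^(i+1) - 1) := by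
  apply Finset.prod_pos
  intro i _
  have : 2 ≤ q^(i+1) := le_trans hq (Nat.le_self_pow (by omega) q)
  omega

lemma gb_ratio (q : ℕ) (hq : 2 ≤ q) (m k : ℕ) :
    gb q m (k+1) * (q^(k+1) - 1) = gb q m k * (q^(m-k) - 1) := by
  have h1 := prod_form q (by omega) m (k+1)
  have h2 := prod_form q (by omega) m k
  rw [Finset.prod_range_succ] at h1
  rw [Finset.prod_range_succ] at h1
  -- h1 : gb q m (k+1) * ((∏ range k) * (q^(k+1)-1)) = (∏ i in range k, (q^(m-i)-1)) * (q^(m-k)-1)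
  rw [← h2] at h1
  have := L_pos q hq k
  apply Nat.eq_of_mul_eq_mul_right this
  calc gb q m (k+1) * (q^(k+1) - 1) * ∏ i ∈ Finset.range k, (q^(i+1) - 1)
      = gb q m (k+1) * ((∏ i ∈ Finset.range k, (q^(i+1) - 1)) * (q^(k+1) - 1)) := by ring
    _ = gb q m k * (∏ i ∈ Finset.range k, (q^(i+1) - 1)) * (q^(m-k) - 1) := h1
    _ = gb q m k * (q^(m-k) - 1) * ∏ i ∈ Finset.range k, (q^(i+1) - 1) := by ring

lemma G_succ (q s : ℕ) : G q (s+1) = G q s * q^(2*s) * (q^(2*s+1) - 1) := by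
  rw [G, G, Finset.prod_Icc_succ_top (by omega)]
  have he : (s+1) * (s+1-1) = s*(s-1) + 2*s := by
    cases s with
    | zero => rfl
    | succ n => simp [Nat.succ_sub_one]; ring
  rw [he, pow_add]
  have h2 : 2*(s+1) - 1 = 2*s+1 := by omega
  rw [h2]
  ring

/-- The main step identity. -/
lemma step_identity (q : ℕ) (hq : 2 ≤ q) (m s : ℕ) :
    gb q (m+1) (2*(s+1)) * G q (s+1)
      = gb q m (2*(s+1)) * G q (s+1) * q^(2*(s+1))
        + gb q m (2*s) * G q s * (q^m - q^(2*s)) := by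
  have hpascal : gb q (m+1) (2*(s+1)) = gb q m (2*s+1) + q^(2*(s+1)) * gb q m (2*(s+1)) := by
    have : 2*(s+1) = (2*s+1) + 1 := by ring
    rw [this]
    rfl
  rw [hpascal, add_mul]
  have hmain : gb q m (2*s+1) * G q (s+1) = gb q m (2*s) * G q s * (q^m - q^(2*s)) := by
    rw [G_succ]
    by_cases hsm : 2*s+1 ≤ m
    · have hub : gb q m (2*s+1) * (q^(2*s+1) - 1) = gb q m (2*s) * (q^(m-2*s) - 1) := by
        have := gb_ratio q hq m (2*s)
        exact this
      calc gb q m (2*s+1) * (G q s * q^(2*s) * (q^(2*s+1) - 1))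
          = (gb q m (2*s+1) * (q^(2*s+1) - 1)) * G q s * q^(2*s) := by ring
        _ = (gb q m (2*s) * (q^(m-2*s) - 1)) * G q s * q^(2*s) := by rw [hub]
        _ = gb q m (2*s) * G q s * (q^(2*s) * (q^(m-2*s) - 1)) := by ring
        _ = gb q m (2*s) * G q s * (q^m - q^(2*s)) := by
            congr 1
            rw [Nat.mul_sub, mul_one, ← pow_add]
            congr 2
            omega
    · by_cases hsm2 : m = 2*s
      · rw [hsm2]
        rw [gb_eq_zero_of_lt q (2*s) (2*s+1) (by omega)]
        simp
      · rw [gb_eq_zero_of_lt q m (2*s+1) (by omega), gb_eq_zero_of_lt q m (2*s) (by omega)]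
        simp
  rw [hmain]
  ring



lemma G_zero (q : ℕ) : G q 0 = 1 := by simp [G]

lemma cnt_closed [Fintype F] (hq : 2 ≤ Fintype.card F) :
    ∀ m s : ℕ, cnt F m (2*s) = gb (Fintype.card F) m (2*s) * G (Fintype.card F) s := by
  intro m
  induction m with
  | zero =>
    intro s
    cases s with
    | zero => simp [cnt_rank_zero, G_zero, gb_zero_right]
    | succ s =>
      rw [cnt_eq_zero_of_gt 0 (2*(s+1)) (by omega),
        gb_eq_zero_of_lt _ 0 (2*(s+1)) (by omega), zero_mul]
  | succ m ih =>
    intro s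
    cases s with
    | zero => simp [cnt_rank_zero, G_zero, gb_zero_right]
    | succ s =>
      have h2 : 2*(s+1) = 2*s + 2 := by ring
      rw [h2, cnt_succ m (2*s), ← h2, ih (s+1), ih s, h2]
      have := step_identity (Fintype.card F) hq m s
      rw [h2] at this
      rw [← this]

lemma shift_identity (q : ℕ) : ∀ s : ℕ,
    (q^(2*s+1) - 1) * ∏ i ∈ Finset.Icc 1 s, (q^(2*i-1) - 1)
      = (q - 1) * ∏ i ∈ Finset.Icc 1 s, (q^(2*i+1) - 1) := by
  intro s
  induction s with
  | zero => simp
  | succ s ih =>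
    rw [Finset.prod_Icc_succ_top (show 1 ≤ s+1 by omega),
      Finset.prod_Icc_succ_top (show 1 ≤ s+1 by omega)]
    have h1 : 2*(s+1) - 1 = 2*s+1 := by omega
    have h2 : 2*(s+1) + 1 = 2*s+3 := by omega
    rw [h1, h2]
    calc (q^(2*(s+1)+1) - 1) * ((∏ i ∈ Finset.Icc 1 s, (q^(2*i-1) - 1)) * (q^(2*s+1) - 1))
        = (q^(2*s+3) - 1) * ((q^(2*s+1) - 1) * ∏ i ∈ Finset.Icc 1 s, (q^(2*i-1) - 1)) := by
          rw [h2]; ring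
      _ = (q^(2*s+3) - 1) * ((q - 1) * ∏ i ∈ Finset.Icc 1 s, (q^(2*i+1) - 1)) := by rw [ih]
      _ = (q - 1) * ((∏ i ∈ Finset.Icc 1 s, (q^(2*i+1) - 1)) * (q^(2*s+3) - 1)) := by ring

lemma gb_top (q : ℕ) (hq : 2 ≤ q) (s : ℕ) :
    gb q (2*s+1) (2*s) * (q - 1) = q^(2*s+1) - 1 := by
  have hpf := prod_form q (by omega) (2*s+1) (2*s)
  have hrefl : ∏ i ∈ Finset.range (2*s+1), (q^(2*s+1-i) - 1)
      = ∏ i ∈ Finset.range (2*s+1), (q^(i+1) - 1) := by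
    have := Finset.prod_range_reflect (fun j => q^(j+1) - 1) (2*s+1)
    rw [← this]
    apply Finset.prod_congr rfl
    intro i hi
    simp only [Finset.mem_range] at hi
    congr 2
    omega
  have hR : (∏ i ∈ Finset.range (2*s), (q^(2*s+1-i) - 1)) * (q - 1)
      = ∏ i ∈ Finset.range (2*s+1), (q^(i+1) - 1) := by
    rw [← hrefl, Finset.prod_range_succ]
    have e : 2*s+1-2*s = 1 := by omega
    rw [e, pow_one]
  have hL : ∏ i ∈ Finset.range (2*s+1), (q^(i+1) - 1)
      = (∏ i ∈ Finset.range (2*s), (q^(i+1) - 1)) * (q^(2*s+1) - 1) :=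
    Finset.prod_range_succ _ _
  apply Nat.eq_of_mul_eq_mul_right (L_pos q hq (2*s))
  calc gb q (2*s+1) (2*s) * (q-1) * ∏ i ∈ Finset.range (2*s), (q^(i+1) - 1)
      = (gb q (2*s+1) (2*s) * ∏ i ∈ Finset.range (2*s), (q^(i+1) - 1)) * (q-1) := by ring
    _ = (∏ i ∈ Finset.range (2*s), (q^(2*s+1-i) - 1)) * (q-1) := by rw [hpf]
    _ = (∏ i ∈ Finset.range (2*s), (q^(i+1) - 1)) * (q^(2*s+1) - 1) := by rw [hR, hL]
    _ = (q^(2*s+1) - 1) * ∏ i ∈ Finset.range (2*s), (q^(i+1) - 1) := by ring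

lemma final_value (q : ℕ) (hq : 2 ≤ q) (s : ℕ) :
    gb q (2*s+1) (2*s) * G q s
      = q^(s*(s-1)) * ∏ i ∈ Finset.Icc 1 s, (q^(2*i+1) - 1) := by
  have hq1 : 1 ≤ q - 1 := by omega
  apply Nat.eq_of_mul_eq_mul_right (show 0 < q - 1 by omega)
  calc gb q (2*s+1) (2*s) * G q s * (q-1)
      = (gb q (2*s+1) (2*s) * (q-1)) * G q s := by ring
    _ = (q^(2*s+1) - 1) * G q s := by rw [gb_top q hq s]
    _ = q^(s*(s-1)) * ((q^(2*s+1) - 1) * ∏ i ∈ Finset.Icc 1 s, (q^(2*i-1) - 1)) := by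
        rw [G]; ring
    _ = q^(s*(s-1)) * ((q - 1) * ∏ i ∈ Finset.Icc 1 s, (q^(2*i+1) - 1)) := by
        rw [shift_identity]
    _ = q^(s*(s-1)) * (∏ i ∈ Finset.Icc 1 s, (q^(2*i+1) - 1)) * (q-1) := by ring

end CardAlt

/-- For `n` odd, the number of `n × n` skew-symmetric (alternating) matrices over `GF(q)`
of rank `n - 1` equals `q^((n-1)(n-3)/4) ⋅ ∏_{i=1}^{(n-1)/2} (q^(2i+1) - 1)`. -/
theorem card_corank_one_alternating_matrices {q n : ℕ} (hn : 3 ≤ n) (hodd : Odd n)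
    {F : Type*} [Field F] [Fintype F] (hF : Fintype.card F = q) :
    Set.ncard {A : Matrix (Fin n) (Fin n) F |
        Matrix.transpose A = -A ∧ (∀ i, A i i = 0) ∧ A.rank = n - 1} =
      q ^ ((n - 1) * (n - 3) / 4) *
        ∏ i ∈ Finset.Icc 1 ((n - 1) / 2), (q ^ (2 * i + 1) - 1) := by
  subst hF
  obtain ⟨s, hs⟩ := hodd
  have hs1 : 1 ≤ s := by omega
  have hq : 2 ≤ Fintype.card F := Fintype.one_lt_card
  have h2 : n - 1 = 2*s := by omega
  have h3 : n = 2*s+1 := by omega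
  have h4 : 2*s*(2*s+1-3)/4 = s*(s-1) := by
    have e2 : 2*s+1-3 = 2*(s-1) := by omega
    rw [e2]
    have e3 : 2*s*(2*(s-1)) = 4*(s*(s-1)) := by ring
    rw [e3]
    omega
  have h5 : 2*s/2 = s := by omega
  have h1 : Set.ncard {A : Matrix (Fin n) (Fin n) F |
      Matrix.transpose A = -A ∧ (∀ i, A i i = 0) ∧ A.rank = n - 1}
      = CardAlt.cnt F n (n-1) := by
    rw [← Nat.card_coe_set_eq]
    rfl
  rw [h1, h2, h3, CardAlt.cnt_closed hq (2*s+1) s, CardAlt.final_value _ hq s, h4, h5]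
end

section
/- A maximum constant-rank code has size at most the given bound: any subset C of M_{m×n}(q) in which every matrix has rank exactly r and any two distinct matrices A, B satisfy rank(A - B) ≥ d satisfies |C| ≤ [n choose r]_q · ∏_{i=0}^{r-d} (q^m - q^i), where [n choose r]_q is the Gaussian binomial coefficient. -/
open Module

open Matrix

private lemma ker_le_of_range_le {m n : ℕ} {F : Type*} [Field F]
    {A B : Matrix (Fin m) (Fin n) F}
    (h : LinearMap.range Bᵀ.mulVecLin ≤ LinearMap.range Aᵀ.mulVecLin) :
    LinearMap.ker A.mulVecLin ≤ LinearMap.ker B.mulVecLin := by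
  intro x hx
  rw [LinearMap.mem_ker, Matrix.mulVecLin_apply] at hx ⊢
  funext i
  obtain ⟨u, hu⟩ := h (LinearMap.mem_range_self _ (Pi.single i 1))
  have h1 : (Bᵀ *ᵥ Pi.single i 1) = B i := by
    funext j
    simp [Matrix.mulVec_single]
  have h2 : (B *ᵥ x) i = (Bᵀ *ᵥ Pi.single i 1) ⬝ᵥ x := by
    rw [h1]; rfl
  rw [Matrix.mulVecLin_apply, Matrix.mulVecLin_apply] at hu
  rw [Pi.zero_apply, h2, ← hu, Matrix.mulVec_transpose, ← Matrix.dotProduct_mulVec, hx,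
    dotProduct_zero]

private lemma exists_lift_indep {n k : ℕ} {F : Type*} [Field F]
    (K : Submodule F (Fin n → F)) (hk : k ≤ finrank F ((Fin n → F) ⧸ K)) :
    ∃ v : Fin k → (Fin n → F),
      LinearIndependent F (fun i => Submodule.Quotient.mk (p := K) (v i)) := by
  have : FiniteDimensional F ((Fin n → F) ⧸ K) := inferInstance
  let b := finBasis F ((Fin n → F) ⧸ K)
  have hw : LinearIndependent F (fun i : Fin k => b (Fin.castLE hk i)) :=
    b.linearIndependent.comp _ (Fin.castLE_injective hk)
  choose v hv using fun i : Fin k => Submodule.Quotient.mk_surjective K (b (Fin.castLE hk i))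
  exact ⟨v, by simpa [hv] using hw⟩

/-- Bound on constant-rank codes: if every matrix of `C ⊆ M_{m×n}(q)` has rank exactly `r`
and any two distinct members are at rank distance at least `d` (`1 ≤ d ≤ r ≤ min(m,n)`),
then `|C| ≤ [n choose r]_q ⋅ ∏_{i=0}^{r-d} (q^m - q^i)`, where the Gaussian binomial
coefficient `[n choose r]_q` is the number of `r`-dimensional subspaces of `GF(q)^n`. -/
theorem constant_rank_code_bound {q m n d r : ℕ} (hd : 1 ≤ d) (hdr : d ≤ r)
    (hrm : r ≤ m) (hrn : r ≤ n)
    {F : Type*} [Field F] [Fintype F] (hF : Fintype.card F = q)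
    (C : Set (Matrix (Fin m) (Fin n) F))
    (hrank : ∀ A ∈ C, A.rank = r)
    (hdist : ∀ A ∈ C, ∀ B ∈ C, A ≠ B → d ≤ (A - B).rank) :
    C.ncard ≤ Set.ncard {W : Submodule F (Fin n → F) | finrank F W = r} *
      ∏ i ∈ Finset.range (r - d + 1), (q ^ m - q ^ i) := by
  classical
  set k := r - d + 1 with hkdef
  have hkr : k ≤ r := by omega
  -- choice of lift families
  have hex : ∀ K : Submodule F (Fin n → F), ∃ v : Fin k → (Fin n → F),
      finrank F ((Fin n → F) ⧸ K) = r →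
      LinearIndependent F (fun i => Submodule.Quotient.mk (p := K) (v i)) := by
    intro K
    by_cases h : finrank F ((Fin n → F) ⧸ K) = r
    · obtain ⟨v, hv⟩ := exists_lift_indep K (h ▸ hkr)
      exact ⟨v, fun _ => hv⟩
    · exact ⟨fun _ => 0, fun h' => absurd h' h⟩
  choose v hv using hex
  -- facts about members of C
  have hquot : ∀ A ∈ C, finrank F ((Fin n → F) ⧸ LinearMap.ker A.mulVecLin) = r := by
    intro A hA
    rw [A.mulVecLin.quotKerEquivRange.finrank_eq]
    exact hrank A hA
  -- the injection
  set Φ : Matrix (Fin m) (Fin n) F →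
      Submodule F (Fin n → F) × (Fin k → (Fin m → F)) :=
    fun A => (LinearMap.range Aᵀ.mulVecLin,
      fun i => A *ᵥ v (LinearMap.ker A.mulVecLin) i) with hΦ
  have hinj : Set.InjOn Φ C := by
    intro A hA B hB hAB
    by_contra hne
    have h1 : LinearMap.range Aᵀ.mulVecLin = LinearMap.range Bᵀ.mulVecLin :=
      congrArg Prod.fst hAB
    have hker : LinearMap.ker A.mulVecLin = LinearMap.ker B.mulVecLin :=
      le_antisymm (ker_le_of_range_le h1.ge) (ker_le_of_range_le h1.le)
    set K := LinearMap.ker A.mulVecLin with hK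
    set w := v K with hw
    have hind : LinearIndependent F (fun i => Submodule.Quotient.mk (p := K) (w i)) :=
      hv K (hquot A hA)
    have heqv : ∀ i, A *ᵥ w i = B *ᵥ w i := by
      intro i
      have := congrArg Prod.snd hAB
      simp only [hΦ] at this
      rw [← hker] at this
      exact congrFun this i
    -- kernel of A - B
    set L := LinearMap.ker (A - B).mulVecLin with hL
    have hKL : K ≤ L := by
      intro x hx
      have hxA : A *ᵥ x = 0 := hx
      have hxB : B *ᵥ x = 0 := by
        have hx' : x ∈ LinearMap.ker B.mulVecLin := hker ▸ hx
        exact hx'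
      show (A - B) *ᵥ x = 0
      rw [Matrix.sub_mulVec, hxA, hxB, sub_zero]
    have hwL : ∀ i, w i ∈ L := by
      intro i
      show (A - B) *ᵥ w i = 0
      rw [Matrix.sub_mulVec, heqv i, sub_self]
    set W := Submodule.span F (Set.range w) with hWdef
    have hWL : W ≤ L := Submodule.span_le.mpr (Set.range_subset_iff.mpr hwL)
    have hwind : LinearIndependent F w := hind.of_comp K.mkQ
    have hfW : finrank F W = k := by
      rw [hWdef, finrank_span_eq_card hwind, Fintype.card_fin]
    have hdisj : K ⊓ W = ⊥ := by
      rw [eq_bot_iff]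
      rintro x ⟨hxK, hxW⟩
      obtain ⟨c, hc⟩ := (Submodule.mem_span_range_iff_exists_fun F).mp hxW
      have h0 : K.mkQ (∑ i, c i • w i) = 0 := by
        rw [hc, Submodule.mkQ_apply, Submodule.Quotient.mk_eq_zero]
        exact hxK
      rw [map_sum] at h0
      simp only [_root_.map_smul, Submodule.mkQ_apply] at h0
      have := (Fintype.linearIndependent_iff.mp hind) c h0
      have : x = 0 := by
        rw [← hc]
        simp [this]
      simp [this]
    have hsup : finrank F ((K ⊔ W : Submodule F (Fin n → F)) : Submodule F (Fin n → F))
        + finrank F (K ⊓ W : Submodule F (Fin n → F)) = finrank F K + finrank F W :=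
      Submodule.finrank_sup_add_finrank_inf_eq K W
    have hKn : finrank F ((Fin n → F) ⧸ K) + finrank F K = n := by
      rw [Submodule.finrank_quotient_add_finrank]
      simp [finrank_pi]
    have hLfin : finrank F K + k ≤ finrank F L := by
      have h1 : finrank F (K ⊔ W : Submodule F (Fin n → F)) ≤ finrank F L :=
        Submodule.finrank_mono (sup_le hKL hWL)
      have h2 := Submodule.finrank_sup_add_finrank_inf_eq K W
      rw [hdisj] at h2
      simp only [finrank_bot, add_zero] at h2
      omega
    have hrn2 : (A - B).rank + finrank F L = n := by
      have h := LinearMap.finrank_range_add_finrank_ker (A - B).mulVecLin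
      simpa [Matrix.rank, Fintype.card_fin] using h
    have hdAB : d ≤ (A - B).rank := hdist A hA B hB hne
    have hKr : finrank F K + r = n := by
      have := hKn
      rw [hquot A hA] at this
      omega
    omega
  -- counting
  set S := {W : Submodule F (Fin n → F) | finrank F W = r} with hS
  set T := {w : Fin k → (Fin m → F) | LinearIndependent F w} with hT
  have hsub : Φ '' C ⊆ S ×ˢ T := by
    rintro _ ⟨A, hA, rfl⟩
    constructor
    · show finrank F (LinearMap.range Aᵀ.mulVecLin) = r
      have h : Aᵀ.rank = r := by rw [Matrix.rank_transpose]; exact hrank A hA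
      simpa [Matrix.rank] using h
    · show LinearIndependent F (fun i => A *ᵥ v (LinearMap.ker A.mulVecLin) i)
      have hind := hv _ (hquot A hA)
      rw [Fintype.linearIndependent_iff]
      intro c hc
      have h0 : A.mulVecLin (∑ i, c i • v (LinearMap.ker A.mulVecLin) i) = 0 := by
        rw [map_sum]
        simp only [_root_.map_smul, Matrix.mulVecLin_apply]
        exact hc
      have hmem : (∑ i, c i • v (LinearMap.ker A.mulVecLin) i) ∈
          LinearMap.ker A.mulVecLin := h0
      have h1 : (LinearMap.ker A.mulVecLin).mkQ
          (∑ i, c i • v (LinearMap.ker A.mulVecLin) i) = 0 := by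
        rw [Submodule.mkQ_apply, Submodule.Quotient.mk_eq_zero]
        exact hmem
      rw [map_sum] at h1
      simp only [_root_.map_smul, Submodule.mkQ_apply] at h1
      exact (Fintype.linearIndependent_iff.mp hind) c h1
  have hfinSub : Finite (Submodule F (Fin n → F)) :=
    Finite.of_injective _ SetLike.coe_injective
  have hfin : (S ×ˢ T).Finite := Set.toFinite _
  have h1 : C.ncard = (Φ '' C).ncard := (Set.ncard_image_of_injOn hinj).symm
  have h2 : (Φ '' C).ncard ≤ (S ×ˢ T).ncard := Set.ncard_le_ncard hsub hfin
  have h3 : (S ×ˢ T).ncard = S.ncard * T.ncard := by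
    rw [← Nat.card_coe_set_eq, ← Nat.card_coe_set_eq, ← Nat.card_coe_set_eq,
      Nat.card_congr (Equiv.Set.prod S T), Nat.card_prod]
  have h4 : T.ncard = ∏ i ∈ Finset.range k, (q ^ m - q ^ i) := by
    have hm : finrank F (Fin m → F) = m := by simp [finrank_pi]
    have hkm : k ≤ finrank F (Fin m → F) := by rw [hm]; omega
    have hcard := card_linearIndependent (K := F) (V := Fin m → F) hkm
    rw [← Nat.card_coe_set_eq]
    have he : Nat.card T = Nat.card {s : Fin k → (Fin m → F) // LinearIndependent F s} :=
      Nat.card_congr (Equiv.subtypeEquivRight (fun w => Iff.rfl))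
    rw [he, hcard, hm, hF]
    exact Fin.prod_univ_eq_prod_range (fun i => q ^ m - q ^ i) k
  rw [h1]
  calc (Φ '' C).ncard ≤ (S ×ˢ T).ncard := h2
    _ = S.ncard * ∏ i ∈ Finset.range k, (q ^ m - q ^ i) := by rw [h3, h4]
end
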